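/- arXiv:2502.06076 — 7 statements merged into one kernel-verified Lean document; each statement's English description precedes it below -/
import Mathlib

section
/- Let θ ∈ (0,1) and let N be a positive integer with N ≤ 1/(4θ(1−θ)) − 1. Then there exists a temperature τ̃ > 0 such that (∫₀¹ ∂_θ h_{τ̃}(u,θ) du + 2)² + (1/N)·Var_{U~Uniform[0,1]}(∂_θ h_{τ̃}(U,θ)) < (1/N)·(1/(θ(1−θ)) − 4); that is, the mean squared error of the N-sample Smoothed-Autodiff estimator with temperature τ̃ is strictly smaller than the mean squared error of the N-sample REINFORCE estimator. -/
open Real Filter MeasureTheory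

/-- The smoothed reparameterization `h_τ(u, θ)`. -/
noncomputable def hSm (τ u θ : ℝ) : ℝ :=
  (Real.exp ((u - θ) / τ) - 1) / (Real.exp ((u - θ) / τ) + 1)

/-- The θ-partial derivative `∂_θ h_τ(u, θ)`. -/
noncomputable def dhSm (τ u θ : ℝ) : ℝ :=
  -(2 / τ) * Real.exp ((u - θ) / τ) / (Real.exp ((u - θ) / τ) + 1) ^ 2

/-- Mean of `∂_θ h_τ(U, θ)` for `U ~ Uniform[0,1]`. -/
noncomputable def meanDh (τ θ : ℝ) : ℝ := ∫ u in (0:ℝ)..1, dhSm τ u θ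

/-- Variance of `∂_θ h_τ(U, θ)` for `U ~ Uniform[0,1]`. -/
noncomputable def varDh (τ θ : ℝ) : ℝ :=
  (∫ u in (0:ℝ)..1, (dhSm τ u θ) ^ 2) - (meanDh τ θ) ^ 2

lemma dhSm_one_cont (θ : ℝ) : Continuous (fun u => dhSm 1 u θ) := by
  unfold dhSm
  exact Continuous.div (by fun_prop) (by fun_prop) (fun u => by positivity)

lemma dhSm_one_lb (θ u : ℝ) : -(1/2) ≤ dhSm 1 u θ := by
  unfold dhSm
  have hg : 0 < Real.exp ((u - θ) / 1) := Real.exp_pos _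
  set g := Real.exp ((u - θ) / 1)
  have hden : (0:ℝ) < (g + 1)^2 := by positivity
  rw [le_div_iff₀ hden]
  nlinarith [sq_nonneg (g - 1)]

lemma dhSm_one_ub (θ u : ℝ) (hθ : θ ∈ Set.Ioo (0:ℝ) 1) (hu : u ∈ Set.Icc (0:ℝ) 1) :
    dhSm 1 u θ ≤ -(37/100) := by
  unfold dhSm
  obtain ⟨hθ0, hθ1⟩ := hθ
  obtain ⟨hu0, hu1⟩ := hu
  have hE1 : (2.7182818283 : ℝ) < Real.exp 1 := Real.exp_one_gt_d9
  have hE2 : Real.exp 1 < 2.7182818286 := Real.exp_one_lt_d9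
  have hg : 0 < Real.exp ((u - θ) / 1) := Real.exp_pos _
  have hgle : Real.exp ((u - θ) / 1) ≤ Real.exp 1 := by
    apply Real.exp_le_exp.2; rw [div_one]; linarith
  have hgmul : 1 ≤ Real.exp ((u - θ) / 1) * Real.exp 1 := by
    rw [← Real.exp_add]
    apply Real.one_le_exp; rw [div_one]; linarith
  set g := Real.exp ((u - θ) / 1)
  set E := Real.exp 1
  have hden : (0:ℝ) < (g + 1)^2 := by positivity
  rw [div_le_iff₀ hden]
  have key : 0 ≤ (g * E - 1) * (E - g) := by
    apply mul_nonneg <;> linarith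
  nlinarith [sq_nonneg (g - 1), sq_nonneg g, mul_pos hg hg]

/-- For `θ ∈ (0,1)` and `N ≤ 1/(4θ(1−θ)) − 1`, there is a temperature `τ̃ > 0` for which the
MSE of the `N`-sample Smoothed-Autodiff estimator is strictly smaller than the MSE
`(1/N)·(1/(θ(1−θ)) − 4)` of the `N`-sample REINFORCE estimator. -/
theorem smoothed_autodiff_beats_reinforce
    (θ : ℝ) (hθ : θ ∈ Set.Ioo (0:ℝ) 1) (N : ℕ) (hN : 0 < N)
    (hNle : (N : ℝ) ≤ 1 / (4 * θ * (1 - θ)) - 1) :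
    ∃ τ : ℝ, 0 < τ ∧
      (meanDh τ θ + 2) ^ 2 + (1 / (N : ℝ)) * varDh τ θ
        < (1 / (N : ℝ)) * (1 / (θ * (1 - θ)) - 4) := by
  obtain ⟨hθ0, hθ1⟩ := hθ
  refine ⟨1, one_pos, ?_⟩
  have hNpos : (0:ℝ) < (N:ℝ) := by exact_mod_cast hN
  have hNinv : (0:ℝ) < 1 / (N:ℝ) := by positivity
  have hNinv1 : 1 / (N:ℝ) ≤ 1 := by
    rw [div_le_one hNpos]; exact_mod_cast hN
  -- RHS ≥ 4
  have hp : (0:ℝ) < θ * (1 - θ) := by nlinarith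
  have h4p : (0:ℝ) < 4 * θ * (1 - θ) := by nlinarith
  have h1 : ((N:ℝ) + 1) * (4 * θ * (1 - θ)) ≤ 1 := by
    have := (le_div_iff₀ h4p).mp (by linarith : (N:ℝ) + 1 ≤ 1 / (4 * θ * (1 - θ)))
    linarith
  have hRHS : 4 ≤ (1 / (N:ℝ)) * (1 / (θ * (1 - θ)) - 4) := by
    have h2 : 4 * (N:ℝ) + 4 ≤ 1 / (θ * (1 - θ)) := by
      rw [le_div_iff₀ hp]; nlinarith
    have h3 : 4 * (N:ℝ) ≤ 1 / (θ * (1 - θ)) - 4 := by linarith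
    calc (4:ℝ) = (1 / (N:ℝ)) * (4 * (N:ℝ)) := by field_simp
    _ ≤ (1 / (N:ℝ)) * (1 / (θ * (1 - θ)) - 4) := by
        apply mul_le_mul_of_nonneg_left h3 (le_of_lt hNinv)
  -- integrability
  have hint : IntervalIntegrable (fun u => dhSm 1 u θ) volume 0 1 :=
    (dhSm_one_cont θ).intervalIntegrable 0 1
  have hintsq : IntervalIntegrable (fun u => (dhSm 1 u θ)^2) volume 0 1 :=
    (((dhSm_one_cont θ).pow 2)).intervalIntegrable 0 1
  -- bounds on mean
  have hm_ub : meanDh 1 θ ≤ -(37/100) := by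
    have := intervalIntegral.integral_mono_on (by norm_num : (0:ℝ) ≤ 1) hint
      (intervalIntegrable_const (c := -(37/100))) (fun u hu => dhSm_one_ub θ u ⟨hθ0, hθ1⟩ hu)
    simpa [meanDh] using this
  have hm_lb : -(1/2) ≤ meanDh 1 θ := by
    have := intervalIntegral.integral_mono_on (by norm_num : (0:ℝ) ≤ 1)
      (intervalIntegrable_const (c := -(1/2))) hint (fun u _ => dhSm_one_lb θ u)
    simpa [meanDh] using this
  -- bounds on second moment
  have hsq_ub : (∫ u in (0:ℝ)..1, (dhSm 1 u θ)^2) ≤ 1/4 := by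
    have := intervalIntegral.integral_mono_on (by norm_num : (0:ℝ) ≤ 1) hintsq
      (intervalIntegrable_const (c := (1/4:ℝ)))
      (fun u hu => by nlinarith [dhSm_one_lb θ u, dhSm_one_ub θ u ⟨hθ0, hθ1⟩ hu])
    simpa using this
  -- bound the variance term
  have hvar_le : varDh 1 θ ≤ 1/4 := by
    have : (meanDh 1 θ)^2 ≥ 0 := sq_nonneg _
    unfold varDh; linarith
  have hq : (1 / (N:ℝ)) * varDh 1 θ ≤ 1/4 := by
    rcases le_or_gt (varDh 1 θ) 0 with h | h
    · have : (1 / (N:ℝ)) * varDh 1 θ ≤ 0 := mul_nonpos_of_nonneg_of_nonpos (le_of_lt hNinv) h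
      linarith
    · calc (1 / (N:ℝ)) * varDh 1 θ ≤ 1 * varDh 1 θ :=
            mul_le_mul_of_nonneg_right hNinv1 (le_of_lt h)
      _ ≤ 1/4 := by linarith
  -- final arithmetic
  have hfinal : (meanDh 1 θ + 2)^2 + (1 / (N:ℝ)) * varDh 1 θ < 4 := by
    nlinarith [sq_nonneg (meanDh 1 θ + 1/2), hm_ub, hm_lb, hq]
  linarith
end

section
/- Fix a positive integer N. For θ = 1/k with integer k ≥ 2 (and likewise for θ = 1 − 1/k), the mean squared error of the N-sample REINFORCE estimator equals (1/N)·(k²/(k−1) − 4); in particular it is at least (k−4)/N and tends to +∞ as k → ∞, i.e., it is Ω(k). -/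
open Filter

/-- `E[R]` for the single-sample REINFORCE random variable `R`, which equals `−1/θ` with
probability `θ` and `−1/(1−θ)` with probability `1−θ`. -/
noncomputable def ER (θ : ℝ) : ℝ := θ * (-1 / θ) + (1 - θ) * (-1 / (1 - θ))

/-- `Var(R)` for the single-sample REINFORCE random variable. -/
noncomputable def VarR (θ : ℝ) : ℝ :=
  θ * (-1 / θ) ^ 2 + (1 - θ) * (-1 / (1 - θ)) ^ 2 - (ER θ) ^ 2

/-- MSE of the `N`-sample REINFORCE estimator against the true gradient `−2`;
since the estimator is unbiased this equals `Var(R)/N`. -/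
noncomputable def reinforceMSE (N : ℕ) (θ : ℝ) : ℝ := VarR θ / N

lemma mse_val (N : ℕ) (hN : 0 < N) (k : ℝ) (hk : 2 ≤ k) :
    reinforceMSE N (1 / k) = (1 / (N : ℝ)) * (k ^ 2 / (k - 1) - 4) ∧
    reinforceMSE N (1 - 1 / k) = (1 / (N : ℝ)) * (k ^ 2 / (k - 1) - 4) := by
  have hk0 : k ≠ 0 := by linarith
  have hk1 : k - 1 ≠ 0 := by linarith
  have hN0 : (N : ℝ) ≠ 0 := Nat.cast_ne_zero.mpr hN.ne'
  have h1 : (1 : ℝ) - 1 / k ≠ 0 := by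
    rw [sub_ne_zero]
    intro h
    have : k = 1 := by field_simp at h; linarith
    linarith
  constructor <;>
  · unfold reinforceMSE VarR ER
    field_simp
    ring

lemma mse_ge (k : ℝ) (hk : 2 ≤ k) : k - 4 ≤ k ^ 2 / (k - 1) - 4 := by
  have h1 : (0:ℝ) < k - 1 := by linarith
  have : k ≤ k ^ 2 / (k - 1) := by
    rw [le_div_iff₀ h1]; nlinarith
  linarith

/-- For `θ = 1/k` (and likewise `θ = 1 − 1/k`) with `k ≥ 2`, the MSE of the `N`-sample
REINFORCE estimator equals `(1/N)·(k²/(k−1) − 4)`, is at least `(k−4)/N`, and tends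
to `+∞` as `k → ∞`, i.e., it is `Ω(k)`. -/
theorem reinforce_mse_omega_k (N : ℕ) (hN : 0 < N) :
    (∀ k : ℕ, 2 ≤ k →
        reinforceMSE N (1 / (k : ℝ)) = (1 / (N : ℝ)) * ((k : ℝ) ^ 2 / ((k : ℝ) - 1) - 4) ∧
        ((k : ℝ) - 4) / (N : ℝ) ≤ reinforceMSE N (1 / (k : ℝ)) ∧
        reinforceMSE N (1 - 1 / (k : ℝ)) = (1 / (N : ℝ)) * ((k : ℝ) ^ 2 / ((k : ℝ) - 1) - 4) ∧
        ((k : ℝ) - 4) / (N : ℝ) ≤ reinforceMSE N (1 - 1 / (k : ℝ))) ∧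
    Tendsto (fun k : ℕ => reinforceMSE N (1 / (k : ℝ))) atTop atTop ∧
    Tendsto (fun k : ℕ => reinforceMSE N (1 - 1 / (k : ℝ))) atTop atTop := by
  have hNpos : (0:ℝ) < N := Nat.cast_pos.mpr hN
  have key : ∀ k : ℕ, 2 ≤ k →
      reinforceMSE N (1 / (k : ℝ)) = (1 / (N : ℝ)) * ((k : ℝ) ^ 2 / ((k : ℝ) - 1) - 4) ∧
      ((k : ℝ) - 4) / (N : ℝ) ≤ reinforceMSE N (1 / (k : ℝ)) ∧
      reinforceMSE N (1 - 1 / (k : ℝ)) = (1 / (N : ℝ)) * ((k : ℝ) ^ 2 / ((k : ℝ) - 1) - 4) ∧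
      ((k : ℝ) - 4) / (N : ℝ) ≤ reinforceMSE N (1 - 1 / (k : ℝ)) := by
    intro k hk
    have hk2 : (2:ℝ) ≤ (k:ℝ) := by exact_mod_cast hk
    obtain ⟨h1, h2⟩ := mse_val N hN (k:ℝ) hk2
    have hb := mse_ge (k:ℝ) hk2
    have hbound : ((k : ℝ) - 4) / (N : ℝ) ≤ (1 / (N : ℝ)) * ((k : ℝ) ^ 2 / ((k : ℝ) - 1) - 4) := by
      rw [one_div, inv_mul_eq_div]
      gcongr
    exact ⟨h1, h1 ▸ hbound, h2, h2 ▸ hbound⟩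
  have hmin : Tendsto (fun k : ℕ => ((k : ℝ) - 4) / (N : ℝ)) atTop atTop := by
    have h := (tendsto_atTop_add_const_right atTop (-4)
      (tendsto_natCast_atTop_atTop (R := ℝ))).atTop_div_const hNpos
    simpa [sub_eq_add_neg] using h
  refine ⟨key, ?_, ?_⟩
  · exact tendsto_atTop_mono' atTop
      (by filter_upwards [eventually_ge_atTop 2] with k hk using (key k hk).2.1) hmin
  · exact tendsto_atTop_mono' atTop
      (by filter_upwards [eventually_ge_atTop 2] with k hk using (key k hk).2.2.2) hmin
end

section
/- For every τ > 0, the map θ ↦ ∫₀¹ h_τ(u,θ) du is differentiable on (0,1) with derivative 2·(1/(1 + exp((1−θ)/τ)) − 1/(1 + exp(−θ/τ))), and this derivative equals ∫₀¹ ∂_θ h_τ(u,θ) du. -/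
open Real MeasureTheory

lemma exp_add_one_ne (x : ℝ) : Real.exp x + 1 ≠ 0 := by positivity

lemma integral_hSm_eq (τ : ℝ) (hτ : 0 < τ) (t : ℝ) :
    (∫ u in (0:ℝ)..1, hSm τ u t)
      = 2 * τ * (Real.log (Real.exp ((1 - t) / τ) + 1)
          - Real.log (Real.exp ((0 - t) / τ) + 1)) - 1 := by
  have hderiv : ∀ u ∈ Set.uIcc (0:ℝ) 1,
      HasDerivAt (fun u : ℝ => 2 * τ * Real.log (Real.exp ((u - t) / τ) + 1) - u)
        (hSm τ u t) u := by
    intro u _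
    have h1 : HasDerivAt (fun u : ℝ => (u - t) / τ) (1 / τ) u := by
      simpa using ((hasDerivAt_id u).sub_const t).div_const τ
    have h2 : HasDerivAt (fun u : ℝ => Real.exp ((u - t) / τ) + 1)
        (Real.exp ((u - t) / τ) * (1 / τ)) u := (h1.exp).add_const 1
    have h3 := ((h2.log (exp_add_one_ne _)).const_mul (2 * τ)).sub (hasDerivAt_id u)
    convert h3 using 1
    · rfl
    · rfl
    · rfl
    have hne := exp_add_one_ne ((u - t) / τ)
    simp only [hSm, id_eq]
    field_simp
    ring
  have hcont : Continuous fun u : ℝ => hSm τ u t := by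
    apply Continuous.div (by continuity) (by continuity)
    intro x; exact exp_add_one_ne _
  have := intervalIntegral.integral_eq_sub_of_hasDerivAt hderiv
    (hcont.intervalIntegrable 0 1)
  rw [this]
  ring

/-- For every `τ > 0`, the map `θ ↦ ∫₀¹ h_τ(u,θ) du` is differentiable on `(0,1)` with
derivative `2·(1/(1 + exp((1−θ)/τ)) − 1/(1 + exp(−θ/τ)))`, and this derivative equals
`∫₀¹ ∂_θ h_τ(u,θ) du`. -/
theorem hasDerivAt_integral_hSm (τ : ℝ) (hτ : 0 < τ) (θ : ℝ) (hθ : θ ∈ Set.Ioo (0:ℝ) 1) :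
    HasDerivAt (fun t : ℝ => ∫ u in (0:ℝ)..1, hSm τ u t)
      (2 * (1 / (1 + Real.exp ((1 - θ) / τ)) - 1 / (1 + Real.exp (-θ / τ)))) θ ∧
    2 * (1 / (1 + Real.exp ((1 - θ) / τ)) - 1 / (1 + Real.exp (-θ / τ)))
      = ∫ u in (0:ℝ)..1, dhSm τ u θ := by
  have hτ' : τ ≠ 0 := ne_of_gt hτ
  constructor
  · -- differentiate the closed form
    have hfun : (fun t : ℝ => ∫ u in (0:ℝ)..1, hSm τ u t)
        = fun t : ℝ => 2 * τ * (Real.log (Real.exp ((1 - t) / τ) + 1)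
            - Real.log (Real.exp ((0 - t) / τ) + 1)) - 1 := by
      funext t; exact integral_hSm_eq τ hτ t
    rw [hfun]
    have h1 : HasDerivAt (fun t : ℝ => (1 - t) / τ) (-1 / τ) θ := by
      simpa using ((hasDerivAt_id θ).const_sub 1).div_const τ
    have h2 : HasDerivAt (fun t : ℝ => (0 - t) / τ) (-1 / τ) θ := by
      simpa using ((hasDerivAt_id θ).const_sub 0).div_const τ
    have g1 : HasDerivAt (fun t : ℝ => Real.log (Real.exp ((1 - t) / τ) + 1))
        (Real.exp ((1 - θ) / τ) * (-1 / τ) / (Real.exp ((1 - θ) / τ) + 1)) θ :=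
      ((h1.exp).add_const 1).log (exp_add_one_ne _)
    have g2 : HasDerivAt (fun t : ℝ => Real.log (Real.exp ((0 - t) / τ) + 1))
        (Real.exp ((0 - θ) / τ) * (-1 / τ) / (Real.exp ((0 - θ) / τ) + 1)) θ :=
      ((h2.exp).add_const 1).log (exp_add_one_ne _)
    have h3 := (((g1.sub g2).const_mul (2 * τ)).sub_const 1)
    convert h3 using 1
    · rfl
    · rfl
    · rfl
    have hne1 := exp_add_one_ne ((1 - θ) / τ)
    have hne2 := exp_add_one_ne ((0 - θ) / τ)
    have hz : (0 : ℝ) - θ = -θ := by ring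
    rw [hz] at hne2 ⊢
    field_simp
    ring
  · -- compute the integral of dhSm via an antiderivative
    have hderiv : ∀ u ∈ Set.uIcc (0:ℝ) 1,
        HasDerivAt (fun u : ℝ => 2 / (Real.exp ((u - θ) / τ) + 1))
          (dhSm τ u θ) u := by
      intro u _
      have h1 : HasDerivAt (fun u : ℝ => (u - θ) / τ) (1 / τ) u := by
        simpa using ((hasDerivAt_id u).sub_const θ).div_const τ
      have h2 : HasDerivAt (fun u : ℝ => Real.exp ((u - θ) / τ) + 1)
          (Real.exp ((u - θ) / τ) * (1 / τ)) u := (h1.exp).add_const 1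
      have h3 := (h2.inv (exp_add_one_ne _)).const_mul 2
      have heq : (fun u : ℝ => 2 / (Real.exp ((u - θ) / τ) + 1))
          = fun u : ℝ => 2 * (Real.exp ((u - θ) / τ) + 1)⁻¹ := by
        funext x; rw [div_eq_mul_inv]
      rw [heq]
      convert h3 using 1
      · rfl
      · rfl
      · rfl
      have hne := exp_add_one_ne ((u - θ) / τ)
      simp only [dhSm]
      field_simp
    have hcont : Continuous fun u : ℝ => dhSm τ u θ := by
      apply Continuous.div (by continuity) (by continuity)
      intro x; positivity
    rw [intervalIntegral.integral_eq_sub_of_hasDerivAt hderiv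
      (hcont.intervalIntegrable 0 1)]
    have hne1 := exp_add_one_ne ((1 - θ) / τ)
    have hne2 := exp_add_one_ne ((0 - θ) / τ)
    have hz : (0 : ℝ) - θ = -θ := by ring
    rw [hz] at hne2 ⊢
    field_simp
    ring
end

section
/- For each θ ∈ (0,1) and τ > 0, the squared bias of the Smoothed-Autodiff gradient, (∫₀¹ ∂_θ h_τ(u,θ) du + 2)², equals 4·(1 + 1/(1 + exp((1−θ)/τ)) − 1/(1 + exp(−θ/τ)))²; moreover this quantity is strictly less than 4 for every τ > 0 and converges to 4 as τ → ∞. -/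
open Real Filter MeasureTheory

lemma meanDh_eq (θ τ : ℝ) (hτ : 0 < τ) :
    meanDh τ θ = 2 / (1 + Real.exp ((1 - θ) / τ)) - 2 / (1 + Real.exp (-θ / τ)) := by
  have key : ∀ u : ℝ, HasDerivAt (fun u : ℝ => 2 * (Real.exp ((u - θ) / τ) + 1)⁻¹)
      (dhSm τ u θ) u := by
    intro u
    have h1 : HasDerivAt (fun u : ℝ => (u - θ) / τ) (1 / τ) u := by
      simpa using ((hasDerivAt_id u).sub_const θ).div_const τ
    have h2 : HasDerivAt (fun u : ℝ => Real.exp ((u - θ) / τ))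
        (Real.exp ((u - θ) / τ) * (1 / τ)) u := h1.exp
    have h3 : HasDerivAt (fun u : ℝ => Real.exp ((u - θ) / τ) + 1)
        (Real.exp ((u - θ) / τ) * (1 / τ)) u := h2.add_const 1
    have hne : Real.exp ((u - θ) / τ) + 1 ≠ 0 := by positivity
    have h4 := (h3.inv hne).const_mul 2
    refine h4.congr_deriv ?_
    have hτ' : τ ≠ 0 := ne_of_gt hτ
    unfold dhSm
    field_simp
    try ring
  have hint : IntervalIntegrable (fun u => dhSm τ u θ) volume 0 1 := by
    apply Continuous.intervalIntegrable
    unfold dhSm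
    exact Continuous.div (by fun_prop) (by fun_prop) (fun x => by positivity)
  have h := intervalIntegral.integral_eq_sub_of_hasDerivAt (fun u _ => key u) hint
  unfold meanDh
  rw [h]
  norm_num
  ring_nf

/-- For `θ ∈ (0,1)`: the squared bias `(∫₀¹ ∂_θ h_τ(u,θ) du + 2)²` of the Smoothed-Autodiff
gradient equals `4·(1 + 1/(1 + exp((1−θ)/τ)) − 1/(1 + exp(−θ/τ)))²`; it is strictly less
than `4` for every `τ > 0`; and it converges to `4` as `τ → ∞`. -/
theorem smoothed_autodiff_bias (θ : ℝ) (hθ : θ ∈ Set.Ioo (0:ℝ) 1) :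
    (∀ τ : ℝ, 0 < τ →
      (meanDh τ θ + 2) ^ 2 =
        4 * (1 + 1 / (1 + Real.exp ((1 - θ) / τ)) - 1 / (1 + Real.exp (-θ / τ))) ^ 2 ∧
      (meanDh τ θ + 2) ^ 2 < 4) ∧
    Tendsto (fun τ : ℝ => (meanDh τ θ + 2) ^ 2) atTop (nhds 4) := by
  obtain ⟨hθ0, hθ1⟩ := hθ
  constructor
  · intro τ hτ
    set A := Real.exp ((1 - θ) / τ) with hA
    set B := Real.exp (-θ / τ) with hB
    have hApos : 0 < A := Real.exp_pos _
    have hBpos : 0 < B := Real.exp_pos _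
    have hBA : B < A := by
      apply Real.exp_lt_exp.2
      rw [div_lt_div_iff_of_pos_right hτ] at *
      linarith
    have h1A : (0:ℝ) < 1 + A := by linarith
    have h1B : (0:ℝ) < 1 + B := by linarith
    have heq : meanDh τ θ + 2 = 2 * (1 + 1 / (1 + A) - 1 / (1 + B)) := by
      rw [meanDh_eq θ τ hτ]; ring
    constructor
    · rw [heq]; ring
    · rw [heq]
      set s := 1 + 1 / (1 + A) - 1 / (1 + B) with hs
      have hlt : 1 / (1 + A) < 1 / (1 + B) := by
        exact div_lt_div_of_pos_left one_pos h1B (by linarith)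
      have hs1 : s < 1 := by rw [hs]; linarith
      have hs0 : 0 < s := by
        have : 1 / (1 + B) < 1 := by
          rw [div_lt_one h1B]; linarith
        have : 0 < 1 / (1 + A) := by positivity
        rw [hs]; linarith
      nlinarith
  · have h1 : Tendsto (fun τ : ℝ => (1 - θ) / τ) atTop (nhds 0) :=
      tendsto_const_nhds.div_atTop tendsto_id
    have h2 : Tendsto (fun τ : ℝ => -θ / τ) atTop (nhds 0) :=
      tendsto_const_nhds.div_atTop tendsto_id
    have hA : Tendsto (fun τ : ℝ => Real.exp ((1 - θ) / τ)) atTop (nhds 1) := by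
      simpa [Function.comp_def] using (Real.continuous_exp.tendsto 0).comp h1
    have hB : Tendsto (fun τ : ℝ => Real.exp (-θ / τ)) atTop (nhds 1) := by
      simpa [Function.comp_def] using (Real.continuous_exp.tendsto 0).comp h2
    have hc : ContinuousAt (fun x : ℝ => 2 / (1 + x)) 1 :=
      ContinuousAt.div continuousAt_const (by fun_prop) (by norm_num)
    have hfA : Tendsto (fun τ : ℝ => 2 / (1 + Real.exp ((1 - θ) / τ))) atTop (nhds 1) := by
      have := hc.tendsto.comp hA
      norm_num [Function.comp] at this
      exact this
    have hfB : Tendsto (fun τ : ℝ => 2 / (1 + Real.exp (-θ / τ))) atTop (nhds 1) := by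
      have := hc.tendsto.comp hB
      norm_num [Function.comp] at this
      exact this
    have hmain : Tendsto (fun τ : ℝ => meanDh τ θ + 2) atTop (nhds 2) := by
      have h : Tendsto (fun τ : ℝ =>
          2 / (1 + Real.exp ((1 - θ) / τ)) - 2 / (1 + Real.exp (-θ / τ)) + 2) atTop
          (nhds (1 - 1 + 2)) := Tendsto.add (hfA.sub hfB) tendsto_const_nhds
      have h' : Tendsto (fun τ : ℝ =>
          2 / (1 + Real.exp ((1 - θ) / τ)) - 2 / (1 + Real.exp (-θ / τ)) + 2) atTop
          (nhds 2) := by norm_num at h; exact h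
      apply h'.congr'
      filter_upwards [eventually_gt_atTop (0:ℝ)] with τ hτ
      rw [meanDh_eq θ τ hτ]
    have := hmain.pow 2
    norm_num at this
    exact this
end

section
/- For every θ ∈ (0,1) and τ > 0, ∫₀¹ (∂_θ h_τ(u,θ))² du = (4/τ)·[ (3·exp(−θ/τ) + 1)/(6·(exp(−θ/τ) + 1)³) − (3·exp((1−θ)/τ) + 1)/(6·(exp((1−θ)/τ) + 1)³) ]. -/
open Real MeasureTheory

lemma dhSm_antideriv (τ θ : ℝ) (hτ : τ ≠ 0) (u : ℝ) :
    HasDerivAt (fun u => -(4 / τ) *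
        ((3 * Real.exp ((u - θ) / τ) + 1) / (6 * (Real.exp ((u - θ) / τ) + 1) ^ 3)))
      ((dhSm τ u θ) ^ 2) u := by
  have h1 : HasDerivAt (fun u : ℝ => (u - θ) / τ) (1 / τ) u := by
    simpa using ((hasDerivAt_id u).sub_const θ).div_const τ
  have he : HasDerivAt (fun u : ℝ => Real.exp ((u - θ) / τ))
      (Real.exp ((u - θ) / τ) * (1 / τ)) u := h1.exp
  set e := Real.exp ((u - θ) / τ) with hedef
  have hnum : HasDerivAt (fun u : ℝ => 3 * Real.exp ((u - θ) / τ) + 1)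
      (3 * (e * (1 / τ))) u := ((he.const_mul 3).add_const 1)
  have hden : HasDerivAt (fun u : ℝ => 6 * (Real.exp ((u - θ) / τ) + 1) ^ 3)
      (6 * (3 * (e + 1) ^ 2 * (e * (1 / τ)))) u := by
    have := ((he.add_const 1).pow 3).const_mul 6
    simpa [mul_comm, mul_assoc, mul_left_comm] using this
  have hepos : (0:ℝ) < e := Real.exp_pos _
  have hden_ne : 6 * (e + 1) ^ 3 ≠ 0 := by positivity
  have hdiv := (hnum.div hden hden_ne).const_mul (-(4 / τ))
  refine hdiv.congr_deriv ?_
  symm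
  have he1 : e + 1 ≠ 0 := by positivity
  simp only [dhSm]
  field_simp
  ring

/-- For every `θ ∈ (0,1)` and `τ > 0`,
`∫₀¹ (∂_θ h_τ(u,θ))² du = (4/τ)·[(3·exp(−θ/τ) + 1)/(6·(exp(−θ/τ) + 1)³)
  − (3·exp((1−θ)/τ) + 1)/(6·(exp((1−θ)/τ) + 1)³)]`. -/
theorem integral_sq_dhSm (θ : ℝ) (hθ : θ ∈ Set.Ioo (0:ℝ) 1) (τ : ℝ) (hτ : 0 < τ) :
    ∫ u in (0:ℝ)..1, (dhSm τ u θ) ^ 2 =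
      (4 / τ) *
        ((3 * Real.exp (-θ / τ) + 1) / (6 * (Real.exp (-θ / τ) + 1) ^ 3) -
          (3 * Real.exp ((1 - θ) / τ) + 1) / (6 * (Real.exp ((1 - θ) / τ) + 1) ^ 3)) := by
  have hτ' : τ ≠ 0 := ne_of_gt hτ
  have hcont : Continuous fun u : ℝ => (dhSm τ u θ) ^ 2 := by
    apply Continuous.pow
    unfold dhSm
    apply Continuous.div
    · fun_prop
    · fun_prop
    · intro u
      have : (0:ℝ) < Real.exp ((u - θ) / τ) := Real.exp_pos _
      positivity
  rw [intervalIntegral.integral_eq_sub_of_hasDerivAt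
    (fun u _ => dhSm_antideriv τ θ hτ' u) (hcont.intervalIntegrable 0 1)]
  have h0 : (0 - θ) / τ = -θ / τ := by ring
  rw [h0]
  ring
end

section
/- With Z = (Z_1,…,Z_m) having i.i.d. Gumbel(0,1) coordinates: for every i ∈ {1,…,m}, lim_{τ→∞} E_Z[∂_{θ_i} G(h_τ(Z,θ))] = 0; consequently the squared bias (E_Z[∂_{θ_i} G(h_τ(Z,θ))] − D_i(θ))² converges to D_i(θ)² as τ → ∞. -/
open Real Finset Filter MeasureTheory

/-- The Gumbel(0,1) measure on ℝ, with Lebesgue density `exp(−x − exp(−x))`. -/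
noncomputable def gumbel : Measure ℝ :=
  volume.withDensity fun x => ENNReal.ofReal (Real.exp (-x - Real.exp (-x)))

/-- The law of `Z = (Z_1,…,Z_m)` with i.i.d. Gumbel(0,1) coordinates. -/
noncomputable def gumbelPi (m : ℕ) : Measure (Fin m → ℝ) :=
  Measure.pi fun _ => gumbel

/-- Softmax weight `w_i^τ(z,θ) = exp((log θ_i + z_i)/τ) / ∑_j exp((log θ_j + z_j)/τ)`. -/
noncomputable def softW {m : ℕ} (τ : ℝ) (θ z : Fin m → ℝ) (i : Fin m) : ℝ :=
  Real.exp ((Real.log (θ i) + z i) / τ) / ∑ j, Real.exp ((Real.log (θ j) + z j) / τ)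

/-- Smoothed action `h_τ(z,θ) = ∑_i a_i · w_i^τ(z,θ)`. -/
noncomputable def hTau {m : ℕ} (τ : ℝ) (a θ z : Fin m → ℝ) : ℝ :=
  ∑ i, a i * softW τ θ z i

/-- Single-sample Smoothed-Autodiff gradient `∂_{θ_i} G(h_τ(z,θ))`. -/
noncomputable def saGrad {m : ℕ} (τ : ℝ) (a : Fin m → ℝ) (G : ℝ → ℝ)
    (θ : Fin m → ℝ) (i : Fin m) (z : Fin m → ℝ) : ℝ :=
  deriv (fun t : ℝ => G (hTau τ a (Function.update θ i t) z)) (θ i)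

lemma integrable_exp_neg_abs' : Integrable (fun x : ℝ => Real.exp (-|x|)) := by
  have h1 : IntegrableOn (fun x : ℝ => Real.exp (-|x|)) (Set.Ioi 0) := by
    refine ((exp_neg_integrableOn_Ioi 0 one_pos).congr_fun (fun x hx => ?_) measurableSet_Ioi)
    rw [abs_of_pos hx]; ring_nf
  have h2 : IntegrableOn (fun x : ℝ => Real.exp (-|x|)) (Set.Iic 0) := by
    rw [← Measure.map_neg_eq_self (volume : Measure ℝ)]
    have m : MeasurableEmbedding fun x : ℝ => -x := (Homeomorph.neg ℝ).measurableEmbedding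
    rw [m.integrableOn_map_iff]
    simp_rw [Function.comp_def, abs_neg, Set.neg_preimage, Set.neg_Iic, neg_zero]
    exact (integrableOn_Ici_iff_integrableOn_Ioi).mpr h1
  rw [← integrableOn_univ, ← Set.Iic_union_Ioi (a := (0:ℝ)), integrableOn_union]
  exact ⟨h2, h1⟩

lemma gumbel_density_le (x : ℝ) : Real.exp (-x - Real.exp (-x)) ≤ Real.exp (-|x|) := by
  apply Real.exp_le_exp.2
  rcases le_or_gt 0 x with hx | hx
  · rw [abs_of_nonneg hx]
    have : 0 < Real.exp (-x) := Real.exp_pos _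
    linarith
  · rw [abs_of_neg hx]
    have h : Real.exp (-x) ≥ 1 + (-x) + (-x)^2/2 := by
      have := Real.add_one_le_exp (-x)
      nlinarith [Real.add_one_le_exp (-x), Real.quadratic_le_exp_of_nonneg (by linarith : (0:ℝ) ≤ -x)]
    nlinarith

lemma integrable_gumbel_density : Integrable (fun x : ℝ => Real.exp (-x - Real.exp (-x))) := by
  refine integrable_exp_neg_abs'.mono' ?_ ?_
  · exact (Real.continuous_exp.comp ((continuous_neg).sub (Real.continuous_exp.comp continuous_neg))).aestronglyMeasurable
  · filter_upwards with x
    rw [Real.norm_eq_abs, abs_of_nonneg (Real.exp_pos _).le]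
    exact gumbel_density_le x

instance : IsFiniteMeasure gumbel :=
  isFiniteMeasure_withDensity_ofReal integrable_gumbel_density.hasFiniteIntegral

instance (m : ℕ) : IsFiniteMeasure (gumbelPi m) := by
  unfold gumbelPi; infer_instance

lemma softW_nonneg {m : ℕ} (τ : ℝ) (θ z : Fin m → ℝ) (i : Fin m) : 0 ≤ softW τ θ z i := by
  unfold softW
  positivity

lemma denom_pos {m : ℕ} (hm : 0 < m) (τ : ℝ) (θ z : Fin m → ℝ) :
    0 < ∑ j, Real.exp ((Real.log (θ j) + z j) / τ) := by
  have : Nonempty (Fin m) := Fin.pos_iff_nonempty.mp hm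
  exact Finset.sum_pos (fun j _ => Real.exp_pos _) Finset.univ_nonempty

lemma softW_sum {m : ℕ} (hm : 0 < m) (τ : ℝ) (θ z : Fin m → ℝ) :
    ∑ j, softW τ θ z j = 1 := by
  unfold softW
  rw [← Finset.sum_div, div_self (denom_pos hm τ θ z).ne']

lemma softW_le_one {m : ℕ} (hm : 0 < m) (τ : ℝ) (θ z : Fin m → ℝ) (i : Fin m) :
    softW τ θ z i ≤ 1 := by
  unfold softW
  rw [div_le_one (denom_pos hm τ θ z)]
  exact Finset.single_le_sum (f := fun j => Real.exp ((Real.log (θ j) + z j) / τ))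
    (fun j _ => (Real.exp_pos _).le) (Finset.mem_univ i)

lemma hTau_mem_hull {m : ℕ} (hm : 0 < m) (τ : ℝ) (a θ z : Fin m → ℝ) :
    hTau τ a θ z ∈ convexHull ℝ (Set.range a) := by
  have h := Finset.centerMass_mem_convexHull (Finset.univ) (w := fun j => softW τ θ z j)
    (z := a) (fun j _ => softW_nonneg τ θ z j)
    (by rw [softW_sum hm τ θ z]; norm_num) (fun j _ => Set.mem_range_self j)
  have he : Finset.univ.centerMass (fun j => softW τ θ z j) a = hTau τ a θ z := by
    unfold Finset.centerMass
    rw [softW_sum hm τ θ z]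
    simp [hTau, mul_comm]
  rwa [he] at h

/-- Key derivative formula. -/
lemma saGrad_eq {m : ℕ} (hm : 0 < m) {τ : ℝ} (hτ : 0 < τ) (a : Fin m → ℝ) (G : ℝ → ℝ)
    (hG : Differentiable ℝ G) (θ : Fin m → ℝ) (hθ : ∀ j, 0 < θ j) (i : Fin m) (z : Fin m → ℝ) :
    saGrad τ a G θ i z =
      deriv G (hTau τ a θ z) * (softW τ θ z i * (a i - hTau τ a θ z) / (τ * θ i)) := by
  set D : ℝ := ∑ j, Real.exp ((Real.log (θ j) + z j) / τ) with hDdef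
  set N : ℝ := ∑ j, a j * Real.exp ((Real.log (θ j) + z j) / τ) with hNdef
  have hDpos : 0 < D := denom_pos hm τ θ z
  have hθi := hθ i
  set E : ℝ := Real.exp ((Real.log (θ i) + z i) / τ) with hEdef
  set E' : ℝ := E * ((θ i)⁻¹ / τ) with hE'def
  -- derivative of t ↦ exp((log t + z i)/τ) at θ i
  have hE : HasDerivAt (fun t : ℝ => Real.exp ((Real.log t + z i) / τ)) E' (θ i) := by
    have h1 : HasDerivAt (fun t : ℝ => (Real.log t + z i) / τ) ((θ i)⁻¹ / τ) (θ i) :=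
      ((Real.hasDerivAt_log hθi.ne').add_const (z i)).div_const τ
    exact h1.exp
  have hupdate : ∀ t : ℝ, ∀ j : Fin m, j ≠ i →
      Real.log (Function.update θ i t j) = Real.log (θ j) := by
    intro t j hj; rw [Function.update_of_ne hj]
  -- D and N as functions of t
  have hDfun : ∀ t : ℝ, (∑ j, Real.exp ((Real.log (Function.update θ i t j) + z j) / τ)) =
      Real.exp ((Real.log t + z i) / τ)
        + ∑ j ∈ Finset.univ.erase i, Real.exp ((Real.log (θ j) + z j) / τ) := by
    intro t
    rw [← Finset.add_sum_erase _ _ (Finset.mem_univ i), Function.update_self]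
    congr 1
    exact Finset.sum_congr rfl (fun j hj => by rw [hupdate t j (Finset.ne_of_mem_erase hj)])
  have hNfun : ∀ t : ℝ, (∑ j, a j * Real.exp ((Real.log (Function.update θ i t j) + z j) / τ)) =
      a i * Real.exp ((Real.log t + z i) / τ)
        + ∑ j ∈ Finset.univ.erase i, a j * Real.exp ((Real.log (θ j) + z j) / τ) := by
    intro t
    rw [← Finset.add_sum_erase _ _ (Finset.mem_univ i), Function.update_self]
    congr 1
    exact Finset.sum_congr rfl (fun j hj => by rw [hupdate t j (Finset.ne_of_mem_erase hj)])
  have hDval : (∑ j, Real.exp ((Real.log (Function.update θ i (θ i) j) + z j) / τ)) = D := by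
    rw [Function.update_eq_self]
  have hNval : (∑ j, a j * Real.exp ((Real.log (Function.update θ i (θ i) j) + z j) / τ)) = N := by
    rw [Function.update_eq_self]
  have hD : HasDerivAt
      (fun t : ℝ => ∑ j, Real.exp ((Real.log (Function.update θ i t j) + z j) / τ)) E' (θ i) := by
    have := hE.add_const (∑ j ∈ Finset.univ.erase i, Real.exp ((Real.log (θ j) + z j) / τ))
    exact this.congr_of_eventuallyEq (Filter.Eventually.of_forall fun t => (hDfun t))
  have hN : HasDerivAt
      (fun t : ℝ => ∑ j, a j * Real.exp ((Real.log (Function.update θ i t j) + z j) / τ))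
      (a i * E') (θ i) := by
    have := (hE.const_mul (a i)).add_const
      (∑ j ∈ Finset.univ.erase i, a j * Real.exp ((Real.log (θ j) + z j) / τ))
    exact this.congr_of_eventuallyEq (Filter.Eventually.of_forall fun t => (hNfun t))
  -- hTau as quotient
  have hHfun : ∀ t : ℝ, hTau τ a (Function.update θ i t) z =
      (∑ j, a j * Real.exp ((Real.log (Function.update θ i t j) + z j) / τ)) /
      (∑ j, Real.exp ((Real.log (Function.update θ i t j) + z j) / τ)) := by
    intro t
    simp only [hTau, softW, Finset.sum_div, mul_div_assoc]
  have hDval' : HasDerivAt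
      (fun t : ℝ => ∑ j, Real.exp ((Real.log (Function.update θ i t j) + z j) / τ)) E' (θ i) := hD
  have hDne : (∑ j, Real.exp ((Real.log (Function.update θ i (θ i) j) + z j) / τ)) ≠ 0 := by
    rw [hDval]; exact hDpos.ne'
  have hH : HasDerivAt (fun t : ℝ => hTau τ a (Function.update θ i t) z)
      ((a i * E' * D - N * E') / D ^ 2) (θ i) := by
    have h := hN.div hD hDne
    rw [hDval, hNval] at h
    exact h.congr_of_eventuallyEq (Filter.Eventually.of_forall fun t => (hHfun t))
  have hH0 : hTau τ a (Function.update θ i (θ i)) z = N / D := by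
    rw [hHfun, hDval, hNval]
  have hcomp : HasDerivAt (fun t : ℝ => G (hTau τ a (Function.update θ i t) z))
      (deriv G (hTau τ a θ z) * ((a i * E' * D - N * E') / D ^ 2)) (θ i) := by
    have hGd : HasDerivAt G (deriv G (hTau τ a θ z)) (hTau τ a (Function.update θ i (θ i)) z) := by
      rw [Function.update_eq_self]
      exact (hG (hTau τ a θ z)).hasDerivAt
    exact hGd.comp (θ i) hH
  rw [saGrad, hcomp.deriv]
  congr 1
  -- algebra
  have hhτ : hTau τ a θ z = N / D := by rw [← hH0, Function.update_eq_self]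
  have hsw : softW τ θ z i = E / D := rfl
  rw [hhτ, hsw, hE'def]
  field_simp

lemma squared_bias_of_tendsto {f : ℝ → ℝ} {Di : ℝ}
    (h : Tendsto f atTop (nhds 0)) :
    Tendsto (fun τ => (f τ - Di) ^ 2) atTop (nhds (Di ^ 2)) := by
  have := ((h.sub (tendsto_const_nhds (x := Di))).pow 2)
  simpa [neg_sq] using this

/-- With `Z` having i.i.d. Gumbel(0,1) coordinates: `E_Z[∂_{θ_i} G(h_τ(Z,θ))] → 0` as
`τ → ∞`; consequently the squared bias
`(E_Z[∂_{θ_i} G(h_τ(Z,θ))] − D_i(θ))²` converges to `D_i(θ)²`, where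
`D_i(θ) = ∂_{θ_i} E_θ[G]`. -/
theorem smoothed_autodiff_bias_limit {m : ℕ} (hm : 2 ≤ m) (a : Fin m → ℝ)
    (G : ℝ → ℝ) (hG : Differentiable ℝ G) (Gbar : ℝ)
    (hG' : ∀ x ∈ convexHull ℝ (Set.range a), |deriv G x| ≤ Gbar)
    (θ : Fin m → ℝ) (hθ : ∀ j, 0 < θ j) (i : Fin m) (Di : ℝ)
    (hD : HasDerivAt
      (fun t : ℝ => ∑ j, Function.update θ i t j * G (a j) / ∑ k, Function.update θ i t k)
      Di (θ i)) :
    Tendsto (fun τ : ℝ => ∫ z, saGrad τ a G θ i z ∂(gumbelPi m)) atTop (nhds 0) ∧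
    Tendsto (fun τ : ℝ => ((∫ z, saGrad τ a G θ i z ∂(gumbelPi m)) - Di) ^ 2)
      atTop (nhds (Di ^ 2)) := by
  have hm0 : 0 < m := by omega
  -- bound on the hull
  obtain ⟨M, hM⟩ : ∃ M : ℝ, ∀ x ∈ convexHull ℝ (Set.range a), |x| ≤ M := by
    have hb : Bornology.IsBounded (convexHull ℝ (Set.range a)) :=
      isBounded_convexHull.mpr ((Set.finite_range a).isBounded)
    obtain ⟨M, hM⟩ := hb.exists_norm_le
    exact ⟨M, fun x hx => hM x hx⟩
  have hθi := hθ i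
  set κ : ℝ := ((gumbelPi m) Set.univ).toReal with hκ
  have hGbar : 0 ≤ Gbar := by
    have : a i ∈ convexHull ℝ (Set.range a) := subset_convexHull ℝ _ (Set.mem_range_self i)
    exact le_trans (abs_nonneg _) (hG' _ this)
  have hM0 : 0 ≤ M := by
    have : a i ∈ convexHull ℝ (Set.range a) := subset_convexHull ℝ _ (Set.mem_range_self i)
    exact le_trans (abs_nonneg _) (hM _ this)
  have key : ∀ τ : ℝ, 0 < τ →
      |∫ z, saGrad τ a G θ i z ∂(gumbelPi m)| ≤ (Gbar * (2 * M) / θ i * κ) * τ⁻¹ := by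
    intro τ hτ
    have hbound : ∀ z : Fin m → ℝ, ‖saGrad τ a G θ i z‖ ≤ Gbar * (2 * M) / (τ * θ i) := by
      intro z
      rw [saGrad_eq hm0 hτ a G hG θ hθ i z]
      have hmem : hTau τ a θ z ∈ convexHull ℝ (Set.range a) := hTau_mem_hull hm0 τ a θ z
      have hai : a i ∈ convexHull ℝ (Set.range a) := subset_convexHull ℝ _ (Set.mem_range_self i)
      have h1 : |deriv G (hTau τ a θ z)| ≤ Gbar := hG' _ hmem
      have h2 : |softW τ θ z i| ≤ 1 := by
        rw [abs_of_nonneg (softW_nonneg τ θ z i)]; exact softW_le_one hm0 τ θ z i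
      have h3 : |a i - hTau τ a θ z| ≤ 2 * M := by
        calc |a i - hTau τ a θ z| ≤ |a i| + |hTau τ a θ z| := abs_sub _ _
          _ ≤ M + M := add_le_add (hM _ hai) (hM _ hmem)
          _ = 2 * M := by ring
      have hτθ : 0 < τ * θ i := mul_pos hτ hθi
      rw [Real.norm_eq_abs, abs_mul, abs_div, abs_of_pos hτθ, abs_mul, ← mul_div_assoc]
      gcongr ?_ / (τ * θ i)
      have t1 : |softW τ θ z i| * |a i - hTau τ a θ z| ≤ 1 * (2 * M) :=
        mul_le_mul h2 h3 (abs_nonneg _) zero_le_one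
      have t2 : |deriv G (hTau τ a θ z)| * (|softW τ θ z i| * |a i - hTau τ a θ z|) ≤
          Gbar * (1 * (2 * M)) :=
        mul_le_mul h1 t1 (by positivity) hGbar
      linarith
    have := norm_integral_le_of_norm_le_const (μ := gumbelPi m)
      (f := fun z => saGrad τ a G θ i z) (C := Gbar * (2 * M) / (τ * θ i))
      (Filter.Eventually.of_forall hbound)
    rw [Real.norm_eq_abs] at this
    calc |∫ z, saGrad τ a G θ i z ∂(gumbelPi m)| ≤ Gbar * (2 * M) / (τ * θ i) * κ := this
      _ = (Gbar * (2 * M) / θ i * κ) * τ⁻¹ := by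
          field_simp
  have hto : Tendsto (fun τ : ℝ => ∫ z, saGrad τ a G θ i z ∂(gumbelPi m)) atTop (nhds 0) := by
    apply squeeze_zero_norm' (a := fun τ => (Gbar * (2 * M) / θ i * κ) * τ⁻¹)
    · filter_upwards [eventually_gt_atTop (0:ℝ)] with τ hτ
      exact key τ hτ
    · have := tendsto_inv_atTop_zero.const_mul (Gbar * (2 * M) / θ i * κ)
      simpa using this
  exact ⟨hto, squared_bias_of_tendsto hto⟩
end

section
/- Fix i ∈ {1,…,m}, fix θ_j > 0 for all j ≠ i, and suppose G(a_i) ≠ 0. Then with θ_i = 1/k, the variance Var(R_i) of the single-sample REINFORCE random variable tends to +∞ as k → ∞, growing at rate Ω(k); in particular, for every fixed positive integer N the mean squared error Var(R_i)/N of the N-sample REINFORCE estimator is unbounded as k → ∞. -/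
open Finset Filter

/-- `S = ∑_j θ_j`. -/
noncomputable def Stot {m : ℕ} (θ : Fin m → ℝ) : ℝ := ∑ j, θ j

/-- Value of the single-sample REINFORCE random variable `R_i = G(A)·∂_{θ_i} log π_θ(A)`
when the realized action is `A = a_j` (which happens with probability `θ_j / S`). -/
noncomputable def Rval {m : ℕ} (a : Fin m → ℝ) (G : ℝ → ℝ) (θ : Fin m → ℝ)
    (i j : Fin m) : ℝ :=
  if j = i then G (a i) * (1 / θ i - 1 / Stot θ) else -G (a j) / Stot θ

/-- `E[R_i]`, the expectation of the single-sample REINFORCE random variable. -/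
noncomputable def ERi {m : ℕ} (a : Fin m → ℝ) (G : ℝ → ℝ) (θ : Fin m → ℝ)
    (i : Fin m) : ℝ :=
  ∑ j, (θ j / Stot θ) * Rval a G θ i j

/-- `Var(R_i) = E[R_i²] − (E[R_i])²`. -/
noncomputable def VarRi {m : ℕ} (a : Fin m → ℝ) (G : ℝ → ℝ) (θ : Fin m → ℝ)
    (i : Fin m) : ℝ :=
  (∑ j, (θ j / Stot θ) * (Rval a G θ i j) ^ 2) - (ERi a G θ i) ^ 2

lemma reinforce_key {m : ℕ} (a : Fin m → ℝ) (G : ℝ → ℝ) (θ : Fin m → ℝ) (i : Fin m)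
    (hθ : ∀ j, j ≠ i → 0 < θ j) {t : ℝ} (ht : 0 < t)
    (hT : 0 < ∑ j ∈ Finset.univ \ {i}, θ j) :
    G (a i) ^ 2 * (∑ j ∈ Finset.univ \ {i}, θ j) ^ 2
        / (t * (t + ∑ j ∈ Finset.univ \ {i}, θ j) ^ 3)
      - ((|G (a i)| * (∑ j ∈ Finset.univ \ {i}, θ j)
            + ∑ j ∈ Finset.univ \ {i}, θ j * |G (a j)|)
          / (∑ j ∈ Finset.univ \ {i}, θ j) ^ 2) ^ 2
      ≤ VarRi a G (Function.update θ i t) i := by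
  set T : ℝ := ∑ j ∈ Finset.univ \ {i}, θ j with hTdef
  set θ' : Fin m → ℝ := Function.update θ i t with hθ'
  have hS : Stot θ' = t + T := by
    rw [Stot, hθ', Finset.sum_update_of_mem (mem_univ i)]
  have hSpos : 0 < t + T := by linarith
  have hθ'i : θ' i = t := Function.update_self i t θ
  have hθ'j : ∀ j, j ≠ i → θ' j = θ j := fun j hj => Function.update_of_ne hj t θ
  -- E[R^2] lower bound
  have hsq : ∀ j ∈ Finset.univ.erase i,
      0 ≤ (θ' j / Stot θ') * (Rval a G θ' i j) ^ 2 := by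
    intro j hj
    have hjne : j ≠ i := Finset.ne_of_mem_erase hj
    have h1 : 0 ≤ θ' j := by rw [hθ'j j hjne]; exact (hθ j hjne).le
    have h2 : 0 ≤ Stot θ' := by rw [hS]; exact hSpos.le
    exact mul_nonneg (div_nonneg h1 h2) (sq_nonneg _)
  have hE2 : G (a i) ^ 2 * T ^ 2 / (t * (t + T) ^ 3)
      ≤ ∑ j, (θ' j / Stot θ') * (Rval a G θ' i j) ^ 2 := by
    rw [← Finset.add_sum_erase _ _ (mem_univ i)]
    have hi : (θ' i / Stot θ') * (Rval a G θ' i i) ^ 2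
        = G (a i) ^ 2 * T ^ 2 / (t * (t + T) ^ 3) := by
      rw [Rval, if_pos rfl, hS, hθ'i]
      field_simp
      try ring
    rw [hi]
    nlinarith [Finset.sum_nonneg hsq]
  -- |E[R]| bound
  have hC0 : 0 ≤ |G (a i)| * T + ∑ j ∈ Finset.univ \ {i}, θ j * |G (a j)| := by
    apply add_nonneg (mul_nonneg (abs_nonneg _) hT.le)
    apply Finset.sum_nonneg
    intro j hj
    have hjne : j ≠ i := by simpa using (Finset.mem_sdiff.mp hj).2
    exact mul_nonneg (hθ j hjne).le (abs_nonneg _)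
  have hER : |ERi a G θ' i|
      ≤ (|G (a i)| * T + ∑ j ∈ Finset.univ \ {i}, θ j * |G (a j)|) / T ^ 2 := by
    rw [ERi, ← Finset.add_sum_erase _ _ (mem_univ i)]
    have hTle : T ≤ t + T := by linarith
    calc |((θ' i / Stot θ') * Rval a G θ' i i
            + ∑ j ∈ Finset.univ.erase i, (θ' j / Stot θ') * Rval a G θ' i j)|
        ≤ |(θ' i / Stot θ') * Rval a G θ' i i|
            + ∑ j ∈ Finset.univ.erase i, |(θ' j / Stot θ') * Rval a G θ' i j| := by
          exact (abs_add_le _ _).trans (by gcongr; exact Finset.abs_sum_le_sum_abs _ _)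
      _ ≤ |G (a i)| / T
            + ∑ j ∈ Finset.univ.erase i, θ j * |G (a j)| / T ^ 2 := by
          gcongr with j hj
          · -- term at i
            rw [Rval, if_pos rfl, hS, hθ'i]
            have h1 : 0 ≤ 1 / t - 1 / (t + T) := by
              rw [sub_nonneg]
              gcongr
              linarith
            have h2 : |(t / (t + T)) * (G (a i) * (1 / t - 1 / (t + T)))|
                = (t / (t + T)) * |G (a i)| * (1 / t - 1 / (t + T)) := by
              rw [abs_mul, abs_mul, abs_of_nonneg (by positivity : (0:ℝ) ≤ t / (t+T)),
                abs_of_nonneg h1]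
              ring
            rw [h2]
            have h3 : (t / (t + T)) * |G (a i)| * (1 / t - 1 / (t + T))
                ≤ |G (a i)| * (1 / T) := by
              have habs : 0 ≤ |G (a i)| := abs_nonneg _
              have h4 : (t / (t + T)) * (1 / t - 1 / (t + T)) ≤ 1 / T := by
                have he : (t / (t + T)) * (1 / t - 1 / (t + T)) = T / (t + T) ^ 2 := by
                  field_simp
                  try ring
                rw [he, div_le_div_iff₀ (by positivity) hT]
                nlinarith
              calc (t / (t + T)) * |G (a i)| * (1 / t - 1 / (t + T))
                  = |G (a i)| * ((t / (t + T)) * (1 / t - 1 / (t + T))) := by ring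
                _ ≤ |G (a i)| * (1 / T) := by gcongr
            linarith [h3, (by rw [mul_one_div] : |G (a i)| * (1/T) = |G (a i)| / T)]
          · -- term at j ≠ i
            have hjne : j ≠ i := Finset.ne_of_mem_erase hj
            rw [Rval, if_neg hjne, hS, hθ'j j hjne]
            have : |θ j / (t + T) * (-G (a j) / (t + T))|
                = θ j * |G (a j)| / (t + T) ^ 2 := by
              rw [abs_mul, abs_div, abs_div, abs_neg,
                abs_of_pos (hθ j hjne), abs_of_pos hSpos]
              field_simp
              try ring
              try simp
            rw [this]
            gcongr <;>
              first
                | exact mul_nonneg (hθ j hjne).le (abs_nonneg _)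
                | exact hT
                | positivity
                | nlinarith
      _ = (|G (a i)| * T + ∑ j ∈ Finset.univ \ {i}, θ j * |G (a j)|) / T ^ 2 := by
          rw [← Finset.erase_eq, ← Finset.sum_div, add_div]
          congr 1
          rw [eq_div_iff (by positivity : T ^ 2 ≠ 0)]
          field_simp
          try ring
  -- combine
  have hER2 : (ERi a G θ' i) ^ 2
      ≤ ((|G (a i)| * T + ∑ j ∈ Finset.univ \ {i}, θ j * |G (a j)|) / T ^ 2) ^ 2 := by
    rw [← sq_abs (ERi a G θ' i)]
    gcongr <;> try exact abs_nonneg _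
  rw [VarRi]
  linarith

/-- Fix `i`, fix `θ_j > 0` for `j ≠ i`, and suppose `G(a_i) ≠ 0`. With `θ_i = 1/k`, the
variance `Var(R_i)` grows at rate `Ω(k)` and tends to `+∞` as `k → ∞`; in particular, for
every fixed `N` the MSE `Var(R_i)/N` of the `N`-sample REINFORCE estimator is unbounded. -/
theorem reinforce_variance_unbounded {m : ℕ} (hm : 2 ≤ m) (a : Fin m → ℝ)
    (G : ℝ → ℝ) (θ : Fin m → ℝ) (i : Fin m) (hθ : ∀ j, j ≠ i → 0 < θ j)
    (hGi : G (a i) ≠ 0) :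
    (∃ c : ℝ, 0 < c ∧ ∀ᶠ k : ℕ in atTop,
        c * (k : ℝ) ≤ VarRi a G (Function.update θ i (1 / (k : ℝ))) i) ∧
    Tendsto (fun k : ℕ => VarRi a G (Function.update θ i (1 / (k : ℝ))) i) atTop atTop ∧
    ∀ N : ℕ, 0 < N →
      Tendsto (fun k : ℕ => VarRi a G (Function.update θ i (1 / (k : ℝ))) i / N)
        atTop atTop := by
  set T : ℝ := ∑ j ∈ Finset.univ \ {i}, θ j with hTdef
  have hT : 0 < T := by
    apply Finset.sum_pos
    · intro j hj
      exact hθ j (by simpa using (Finset.mem_sdiff.mp hj).2)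
    · obtain ⟨j, hj⟩ := Fintype.exists_ne_of_one_lt_card
        (by simpa using lt_of_lt_of_le one_lt_two hm) i
      exact ⟨j, by simp [hj]⟩
  set C : ℝ := (|G (a i)| * T + ∑ j ∈ Finset.univ \ {i}, θ j * |G (a j)|) / T ^ 2
    with hCdef
  set c₀ : ℝ := G (a i) ^ 2 * T ^ 2 / (1 + T) ^ 3 with hc₀def
  have hc₀ : 0 < c₀ := by
    have : 0 < G (a i) ^ 2 := by positivity
    positivity
  set c : ℝ := c₀ / 2 with hcdef
  have hc : 0 < c := by positivity
  have key : ∀ᶠ k : ℕ in atTop,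
      c * (k : ℝ) ≤ VarRi a G (Function.update θ i (1 / (k : ℝ))) i := by
    filter_upwards [eventually_ge_atTop (max 1 (⌈(C ^ 2 + 1) / c⌉₊ + 1))] with k hk
    have hk1 : 1 ≤ k := le_trans (le_max_left _ _) hk
    have hkR : (1 : ℝ) ≤ (k : ℝ) := by exact_mod_cast hk1
    have hkpos : (0 : ℝ) < (k : ℝ) := by linarith
    have ht : (0 : ℝ) < 1 / (k : ℝ) := by positivity
    have ht1 : 1 / (k : ℝ) ≤ 1 := by
      rw [div_le_one hkpos]; exact hkR
    have hlow := reinforce_key a G θ i hθ ht hT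
    -- G²T²/(t(t+T)³) ≥ c₀ k
    have hg : c₀ * (k : ℝ) ≤ G (a i) ^ 2 * T ^ 2
        / ((1 / (k : ℝ)) * ((1 / (k : ℝ)) + T) ^ 3) := by
      have hden : (1 / (k : ℝ)) * ((1 / (k : ℝ)) + T) ^ 3
          ≤ (1 / (k : ℝ)) * (1 + T) ^ 3 := by
        gcongr
        try linarith
      have hdenpos : 0 < (1 / (k : ℝ)) * ((1 / (k : ℝ)) + T) ^ 3 := by positivity
      calc c₀ * (k : ℝ) = G (a i) ^ 2 * T ^ 2 / ((1 / (k : ℝ)) * (1 + T) ^ 3) := by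
            rw [hc₀def]; field_simp; try ring
        _ ≤ G (a i) ^ 2 * T ^ 2 / ((1 / (k : ℝ)) * ((1 / (k : ℝ)) + T) ^ 3) := by
            gcongr
            try positivity
      -- need numerator nonneg for gcongr: handled
    -- k large enough: c₀ k - C² ≥ c k
    have hkbig : (⌈(C ^ 2 + 1) / c⌉₊ + 1 : ℕ) ≤ k := le_trans (le_max_right _ _) hk
    have hkbigR : (C ^ 2 + 1) / c ≤ (k : ℝ) := by
      calc (C ^ 2 + 1) / c ≤ (⌈(C ^ 2 + 1) / c⌉₊ : ℝ) := Nat.le_ceil _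
        _ ≤ (k : ℝ) := by exact_mod_cast le_trans (Nat.le_succ _) hkbig
    have hCk : C ^ 2 ≤ c * (k : ℝ) := by
      rw [div_le_iff₀ hc] at hkbigR
      nlinarith
    have : c * (k : ℝ) ≤ c₀ * (k : ℝ) - C ^ 2 := by
      have : c₀ * (k : ℝ) = c * (k : ℝ) + c * (k : ℝ) := by
        rw [hcdef]; ring
      linarith
    linarith
  refine ⟨⟨c, hc, key⟩, ?_, ?_⟩
  · have htc : Tendsto (fun k : ℕ => c * (k : ℝ)) atTop atTop :=
      (tendsto_natCast_atTop_atTop).const_mul_atTop hc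
    exact tendsto_atTop_mono' atTop key htc
  · intro N hN
    have htend : Tendsto (fun k : ℕ => VarRi a G (Function.update θ i (1 / (k : ℝ))) i)
        atTop atTop := by
      have htc : Tendsto (fun k : ℕ => c * (k : ℝ)) atTop atTop :=
        (tendsto_natCast_atTop_atTop).const_mul_atTop hc
      exact tendsto_atTop_mono' atTop key htc
    exact htend.atTop_div_const (by exact_mod_cast hN)
end
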